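/- For ontology-mediated queries Q = (T, q) in which T contains no role-inclusion axioms (no axioms of the form ρ(x,y) → ρ'(x,y)), the number of tree witnesses for Q is at most 3|q|. -/

import Mathlib

/-- A role: a binary predicate together with a direction (`true` = the predicate itself,
`false` = its inverse). -/
abbrev DLRole (BP : Type) := BP × Bool

/-- The inverse of a role. -/
def DLRole.inv {BP : Type} (ρ : DLRole BP) : DLRole BP := (ρ.1, !ρ.2)

/-- OWL 2 QL concepts: `⊤`, unary predicates `A(x)`, and `∃y ρ(x,y)`. -/
inductive DLConcept (UP BP : Type) where
  | top : DLConcept UP BP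
  | atm : UP → DLConcept UP BP
  | ex : DLRole BP → DLConcept UP BP

/-- (The positive part of) an OWL 2 QL ontology: concept inclusions `τ(x) → τ'(x)`, role
inclusions `ρ(x,y) → ρ'(x,y)` and reflexivity axioms `∀x ρ(x,x)`. -/
structure DLOnt (UP BP : Type) where
  ci : Set (DLConcept UP BP × DLConcept UP BP)
  ri : Set (DLRole BP × DLRole BP)
  refl : Set (DLRole BP)

/-- A first-order interpretation of the signature. -/
structure DLInterp (UP BP : Type) where
  Dom : Type
  iu : UP → Set Dom
  ib : BP → Set (Dom × Dom)

/-- The extension of a role in an interpretation. -/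
def DLInterp.role {UP BP : Type} (I : DLInterp UP BP) (ρ : DLRole BP) :
    Set (I.Dom × I.Dom) :=
  if ρ.2 then I.ib ρ.1 else {p | (p.2, p.1) ∈ I.ib ρ.1}

/-- The extension of a concept in an interpretation. -/
def DLInterp.conc {UP BP : Type} (I : DLInterp UP BP) : DLConcept UP BP → Set I.Dom
  | .top => Set.univ
  | .atm A => I.iu A
  | .ex ρ => {d | ∃ d', (d, d') ∈ I.role ρ}

/-- An interpretation is a model of an ontology. -/
def DLInterp.IsModel {UP BP : Type} (I : DLInterp UP BP) (T : DLOnt UP BP) : Prop :=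
  (∀ p ∈ T.ci, I.conc p.1 ⊆ I.conc p.2) ∧
  (∀ p ∈ T.ri, I.role p.1 ⊆ I.role p.2) ∧
  (∀ ρ ∈ T.refl, ∀ d : I.Dom, (d, d) ∈ I.role ρ)

/-- `T ⊨ τ(x) → τ'(x)`. -/
def DLOnt.Sub {UP BP : Type} (T : DLOnt UP BP) (c d : DLConcept UP BP) : Prop :=
  ∀ I : DLInterp UP BP, I.IsModel T → I.conc c ⊆ I.conc d

/-- `T ⊨ ρ(x,y) → σ(x,y)`. -/
def DLOnt.RSub {UP BP : Type} (T : DLOnt UP BP) (ρ σ : DLRole BP) : Prop :=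
  ∀ I : DLInterp UP BP, I.IsModel T → I.role ρ ⊆ I.role σ

/-- `T ⊨ ∀x ρ(x,x)`. -/
def DLOnt.ReflE {UP BP : Type} (T : DLOnt UP BP) (ρ : DLRole BP) : Prop :=
  ∀ I : DLInterp UP BP, I.IsModel T → ∀ d : I.Dom, (d, d) ∈ I.role ρ

/-- `T ⊨ τ(x) → ρ(x,x)`. -/
def DLOnt.Loop {UP BP : Type} (T : DLOnt UP BP) (τ : DLConcept UP BP)
    (ρ : DLRole BP) : Prop :=
  ∀ I : DLInterp UP BP, I.IsModel T → ∀ d ∈ I.conc τ, (d, d) ∈ I.role ρ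

/-- The labelled nulls of the canonical model `C_T^{τ(a)}`: words `ρ₁ ⋯ ρₙ` such that
`T ⊨ τ(x) → ∃y ρ₁(x,y)` but `T, τ(a) ⊭ ρ₁(a,a)`, no `ρᵢ` is entailed reflexive, and
`T ⊨ (∃x ρᵢ(x,y)) → ∃z ρᵢ₊₁(y,z)` but `T ⊭ ρᵢ(y,x) → ρᵢ₊₁(x,y)`.  The empty word denotes
the individual `a`. -/
def GenWord {UP BP : Type} (T : DLOnt UP BP) (τ : DLConcept UP BP)
    (w : List (DLRole BP)) : Prop :=
  (∀ ρ ∈ w, ¬ T.ReflE ρ) ∧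
  (∀ ρ rest, w = ρ :: rest → T.Sub τ (.ex ρ) ∧ ¬ T.Loop τ ρ) ∧
  (∀ i : ℕ, ∀ h : i + 1 < w.length,
      T.Sub (.ex (DLRole.inv (w.get ⟨i, Nat.lt_of_succ_lt h⟩))) (.ex (w.get ⟨i + 1, h⟩)) ∧
      ¬ T.RSub (DLRole.inv (w.get ⟨i, Nat.lt_of_succ_lt h⟩)) (w.get ⟨i + 1, h⟩))

/-- Membership of an element of `C_T^{τ(a)}` in a unary predicate. -/
def CMu {UP BP : Type} (T : DLOnt UP BP) (τ : DLConcept UP BP) (A : UP)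
    (w : List (DLRole BP)) : Prop :=
  (w = [] ∧ T.Sub τ (.atm A)) ∨
  (∃ w' ρ, w = w' ++ [ρ] ∧ T.Sub (.ex (DLRole.inv ρ)) (.atm A))

/-- Membership of a pair of elements of `C_T^{τ(a)}` in a binary predicate. -/
def CMb {UP BP : Type} (T : DLOnt UP BP) (τ : DLConcept UP BP) (P : BP)
    (u v : List (DLRole BP)) : Prop :=
  (u = [] ∧ v = [] ∧ T.Loop τ (P, true)) ∨
  (u = v ∧ T.ReflE (P, true)) ∨
  (∃ ρ, v = u ++ [ρ] ∧ T.RSub ρ (P, true)) ∨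
  (∃ ρ, u = v ++ [ρ] ∧ T.RSub ρ (P, false))

/-- Atoms of a conjunctive query: `A(x)` and `P(x,y)`. -/
inductive QAtom (UP BP V : Type) where
  | ua : UP → V → QAtom UP BP V
  | ba : BP → V → V → QAtom UP BP V
deriving DecidableEq

/-- The variables of an atom. -/
def QAtom.vars {UP BP V : Type} [DecidableEq V] : QAtom UP BP V → Finset V
  | .ua _ x => {x}
  | .ba _ x y => {x, y}

/-- The variables of a CQ. -/
def qvars {UP BP V : Type} [DecidableEq V] (q : Finset (QAtom UP BP V)) : Finset V :=
  q.biUnion QAtom.vars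

/-- `q_t`: the atoms of `q` all of whose variables are in `t_r ∪ t_i` and at least one of
whose variables is in `t_i`. -/
def qtw {UP BP V : Type} [DecidableEq UP] [DecidableEq BP] [DecidableEq V]
    (q : Finset (QAtom UP BP V)) (tr ti : Finset V) : Finset (QAtom UP BP V) :=
  q.filter fun a => a.vars ⊆ tr ∪ ti ∧ ¬ a.vars ⊆ tr

/-- `h` is a homomorphism from the set `S` of atoms to the canonical model `C_T^{τ(a)}`. -/
def HomOn {UP BP V : Type} [DecidableEq V] (T : DLOnt UP BP) (τ : DLConcept UP BP)
    (S : Finset (QAtom UP BP V)) (h : V → List (DLRole BP)) : Prop :=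
  (∀ v ∈ qvars S, GenWord T τ (h v)) ∧
  (∀ a ∈ S,
    (∀ A x, a = QAtom.ua A x → CMu T τ A (h x)) ∧
    (∀ P x y, a = QAtom.ba P x y → CMb T τ P (h x) (h y)))

/-- `(t_r, t_i)` is a candidate tree witness for the OMQ `(T, q)` with answer variables
`ans`: disjoint sets of variables of `q`, `t_i` nonempty and without answer variables,
`q_t` contains every atom of `q` with a variable in `t_i`, and there is a concept `τ` and a
homomorphism `h : q_t → C_T^{τ(a)}` with `t_r = h⁻¹(a)`. -/
def IsPreTW {UP BP V : Type} [DecidableEq UP] [DecidableEq BP] [DecidableEq V]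
    (T : DLOnt UP BP) (q : Finset (QAtom UP BP V)) (ans : Finset V)
    (tr ti : Finset V) : Prop :=
  Disjoint tr ti ∧ ti.Nonempty ∧ Disjoint ti ans ∧ tr ∪ ti ⊆ qvars q ∧
  (∀ a ∈ q, ¬ Disjoint a.vars ti → a ∈ qtw q tr ti) ∧
  ∃ (τ : DLConcept UP BP) (h : V → List (DLRole BP)),
    HomOn T τ (qtw q tr ti) h ∧
    tr ⊆ qvars (qtw q tr ti) ∧
    (∀ v ∈ qvars (qtw q tr ti), (h v = [] ↔ v ∈ tr))

/-- A tree witness: a candidate tree witness whose `q_t` is minimal (no candidate tree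
witness has a strictly smaller set of internal variables). -/
def IsTW {UP BP V : Type} [DecidableEq UP] [DecidableEq BP] [DecidableEq V]
    (T : DLOnt UP BP) (q : Finset (QAtom UP BP V)) (ans : Finset V)
    (tr ti : Finset V) : Prop :=
  IsPreTW T q ans tr ti ∧
  ∀ tr' ti' : Finset V, IsPreTW T q ans tr' ti' → ti' ⊆ ti → ti' = ti

/-- The ontology `T` is of depth `k`: no role is entailed reflexive, some canonical model
`C_T^{τ(a)}` contains a word of length `k`, and none contains a longer word. -/
def HasDepth {UP BP : Type} (T : DLOnt UP BP) (k : ℕ) : Prop :=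
  (∀ ρ : DLRole BP, ¬ T.ReflE ρ) ∧
  (∃ (τ : DLConcept UP BP) (w : List (DLRole BP)), GenWord T τ w ∧ w.length = k) ∧
  (∀ (τ : DLConcept UP BP) (w : List (DLRole BP)), GenWord T τ w → w.length ≤ k)

section Aux

variable {T : DLOnt ℕ ℕ}

/-- With no role inclusions, entailed role inclusion means syntactic equality. -/
lemma rsub_eq (hri : T.ri = ∅) {ρ σ : DLRole ℕ} (h : T.RSub ρ σ) : ρ = σ := by
  by_contra hne
  let I : DLInterp ℕ ℕ :=
    ⟨Bool, fun _ => Set.univ,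
     fun R => {p | p.1 = p.2 ∨ ((R, true) = ρ ∧ p = (false, true)) ∨
       ((R, false) = ρ ∧ p = (true, false))}⟩
  have hib : ∀ (R : ℕ) (p : Bool × Bool), p ∈ I.ib R ↔
      (p.1 = p.2 ∨ ((R, true) = ρ ∧ p = (false, true)) ∨
       ((R, false) = ρ ∧ p = (true, false))) := fun R p => Iff.rfl
  have hrole : ∀ (σ' : DLRole ℕ) (p : Bool × Bool), p ∈ I.role σ' ↔
      (if σ'.2 then p ∈ I.ib σ'.1 else (p.2, p.1) ∈ I.ib σ'.1) := by
    intro σ' p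
    unfold DLInterp.role
    by_cases h2 : σ'.2 <;> simp [h2] <;> exact Iff.rfl
  have hdiag : ∀ (σ' : DLRole ℕ) (d : Bool), (d, d) ∈ I.role σ' := by
    intro σ' d
    rw [hrole]
    by_cases h2 : σ'.2 <;> simp [h2, hib]
  have hmod : I.IsModel T := by
    refine ⟨?_, ?_, ?_⟩
    · rintro ⟨c1, c2⟩ hc d hd
      cases c2 with
      | top => trivial
      | atm A => trivial
      | ex ρ' => exact ⟨d, hdiag ρ' d⟩
    · rw [hri]; rintro p hp; exact absurd hp (Set.notMem_empty p)
    · intro ρ' _ d; exact hdiag ρ' d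
  have hmem : ((false, true) : Bool × Bool) ∈ I.role ρ := by
    rw [hrole]
    by_cases h2 : ρ.2 <;> simp only [h2, if_true, if_false]
    · rw [hib]
      right; left
      exact ⟨by ext <;> simp [h2], rfl⟩
    · rw [hib]
      right; right
      refine ⟨by ext <;> simp [h2, Bool.eq_false_iff] <;> tauto, rfl⟩
  have hσ := h I hmod hmem
  rw [hrole] at hσ
  by_cases h2 : σ.2 <;> simp only [h2, if_true, if_false] at hσ <;> rw [hib] at hσ
  · rcases hσ with h' | ⟨h', h''⟩ | ⟨h', h''⟩
    · simp at h'
    · exact hne (by rw [← h']; ext <;> simp [h2])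
    · exact absurd h'' (by simp)
  · rcases hσ with h' | ⟨h', h''⟩ | ⟨h', h''⟩
    · simp at h'
    · exact absurd h'' (by simp)
    · exact hne (by rw [← h']; ext <;> simp [h2, Bool.eq_false_iff] <;> tauto)

lemma rsub_refl (ρ : DLRole ℕ) : T.RSub ρ ρ := fun _ _ => subset_rfl

lemma reflE_flip {P : ℕ} {b b' : Bool} (h : T.ReflE (P, b)) : T.ReflE (P, b') := by
  intro I hm d
  have := h I hm d
  unfold DLInterp.role at this ⊢
  by_cases hb : b <;> by_cases hb' : b' <;> simp_all

lemma loop_flip {τ} {P : ℕ} {b b' : Bool} (h : T.Loop τ (P, b)) : T.Loop τ (P, b') := by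
  intro I hm d hd
  have := h I hm d hd
  unfold DLInterp.role at this ⊢
  by_cases hb : b <;> by_cases hb' : b' <;> simp_all

end Aux
section Aux2

variable {T : DLOnt ℕ ℕ} {τ τ' : DLConcept ℕ ℕ}

lemma genword_notReflE {w : List (DLRole ℕ)} (h : GenWord T τ w) {ρ : DLRole ℕ}
    (hm : ρ ∈ w) : ¬ T.ReflE ρ := h.1 ρ hm

lemma genword_last_two {v : List (DLRole ℕ)} {a b : DLRole ℕ}
    (h : GenWord T τ (v ++ [a, b])) : ¬ T.RSub (DLRole.inv a) b := by
  have hl : v.length + 1 < (v ++ [a, b]).length := by simp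
  have h2 := (h.2.2 v.length hl).2
  have e1 : (v ++ [a, b]).get ⟨v.length, Nat.lt_of_succ_lt hl⟩ = a := by
    simp [List.get_eq_getElem, List.getElem_append_right]
  have e2 : (v ++ [a, b]).get ⟨v.length + 1, hl⟩ = b := by
    simp [List.get_eq_getElem, List.getElem_append_right]
  rwa [e1, e2] at h2

lemma genword_first {ρ : DLRole ℕ} {rest : List (DLRole ℕ)}
    (h : GenWord T τ (ρ :: rest)) : T.Sub τ (.ex ρ) ∧ ¬ T.Loop τ ρ :=
  h.2.1 ρ rest rfl

/-- The three possible shapes of a `P`-successor of a non-root point. -/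
lemma cmb_cases (hri : T.ri = ∅) {u v : List (DLRole ℕ)} {P : ℕ}
    (hu : u ≠ []) (h : CMb T τ P u v) :
    (v = u ∧ T.ReflE (P, true)) ∨ v = u ++ [(P, true)] ∨ u = v ++ [(P, false)] := by
  rcases h with ⟨h1, _⟩ | ⟨h1, h2⟩ | ⟨ρ, h1, h2⟩ | ⟨ρ, h1, h2⟩
  · exact absurd h1 hu
  · exact Or.inl ⟨h1.symm, h2⟩
  · rw [rsub_eq hri h2] at h1; exact Or.inr (Or.inl h1)
  · rw [rsub_eq hri h2] at h1; exact Or.inr (Or.inr h1)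

/-- In the canonical model with no role inclusions, `P`-successors of a non-root
point are unique (even across different canonical models). -/
lemma succ_unique (hri : T.ri = ∅) {u v v' : List (DLRole ℕ)} {P : ℕ}
    (hu : u ≠ []) (hgu : GenWord T τ u) (hgv : GenWord T τ v) (hgv' : GenWord T τ' v')
    (h1 : CMb T τ P u v) (h2 : CMb T τ' P u v') : v = v' := by
  have rr : T.RSub (DLRole.inv (P, false)) (P, true) := by
    show T.RSub (P, !false) (P, true); exact rsub_refl _
  rcases cmb_cases hri hu h1 with ⟨hv, hrefl⟩ | hv | hv <;>
    rcases cmb_cases hri hu h2 with ⟨hv', hrefl'⟩ | hv' | hv'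
  · rw [hv, hv']
  · exact absurd hrefl (genword_notReflE hgv' (by rw [hv']; simp))
  · exact absurd (reflE_flip hrefl : T.ReflE (P, false))
      (genword_notReflE hgu (by rw [hv']; simp))
  · exact absurd hrefl' (genword_notReflE hgv (by rw [hv]; simp))
  · rw [hv, hv']
  · -- v = u ++ [(P,true)], u = v' ++ [(P,false)]
    rw [hv'] at hv
    rw [List.append_assoc, List.singleton_append] at hv
    exact absurd rr (genword_last_two (by rw [← hv]; exact hgv))
  · exact absurd (reflE_flip hrefl' : T.ReflE (P, false))
      (genword_notReflE hgu (by rw [hv]; simp))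
  · rw [hv] at hv'
    rw [List.append_assoc, List.singleton_append] at hv'
    exact absurd rr (genword_last_two (by rw [← hv']; exact hgv'))
  · rw [hv] at hv'
    exact (List.append_inj_left' hv' rfl).symm ▸ rfl

/-- `P`-predecessor shapes of a non-root point. -/
lemma cmb_cases' (hri : T.ri = ∅) {u v : List (DLRole ℕ)} {P : ℕ}
    (hu : u ≠ []) (h : CMb T τ P v u) :
    (v = u ∧ T.ReflE (P, true)) ∨ u = v ++ [(P, true)] ∨ v = u ++ [(P, false)] := by
  rcases h with ⟨_, h1, _⟩ | ⟨h1, h2⟩ | ⟨ρ, h1, h2⟩ | ⟨ρ, h1, h2⟩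
  · exact absurd h1 hu
  · exact Or.inl ⟨h1, h2⟩
  · rw [rsub_eq hri h2] at h1; exact Or.inr (Or.inl h1)
  · rw [rsub_eq hri h2] at h1; exact Or.inr (Or.inr h1)

lemma pred_unique (hri : T.ri = ∅) {u v v' : List (DLRole ℕ)} {P : ℕ}
    (hu : u ≠ []) (hgu : GenWord T τ u) (hgv : GenWord T τ v) (hgv' : GenWord T τ' v')
    (h1 : CMb T τ P v u) (h2 : CMb T τ' P v' u) : v = v' := by
  have rr : T.RSub (DLRole.inv (P, true)) (P, false) := by
    show T.RSub (P, !true) (P, false); exact rsub_refl _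
  rcases cmb_cases' hri hu h1 with ⟨hv, hrefl⟩ | hv | hv <;>
    rcases cmb_cases' hri hu h2 with ⟨hv', hrefl'⟩ | hv' | hv'
  · rw [hv, hv']
  · exact absurd hrefl (genword_notReflE hgu (by rw [hv']; simp))
  · exact absurd (reflE_flip hrefl : T.ReflE (P, false))
      (genword_notReflE hgv' (by rw [hv']; simp))
  · exact absurd hrefl' (genword_notReflE hgu (by rw [hv]; simp))
  · rw [hv] at hv'
    exact List.append_inj_left' hv' rfl
  · -- u = v ++ [(P,true)], v' = u ++ [(P,false)]
    rw [hv] at hv'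
    rw [List.append_assoc, List.singleton_append] at hv'
    exact absurd rr (genword_last_two (by rw [← hv']; exact hgv'))
  · exact absurd (reflE_flip hrefl' : T.ReflE (P, false))
      (genword_notReflE hgv (by rw [hv]; simp))
  · rw [hv'] at hv
    rw [List.append_assoc, List.singleton_append] at hv
    exact absurd rr (genword_last_two (by rw [← hv]; exact hgv))
  · rw [hv, hv']

/-- The unique child of the root. -/
lemma cmb_root_succ (hri : T.ri = ∅) {v : List (DLRole ℕ)} {P : ℕ}
    (hv : v ≠ []) (h : CMb T τ P [] v) : v = [(P, true)] := by
  rcases h with ⟨_, h1, _⟩ | ⟨h1, _⟩ | ⟨ρ, h1, h2⟩ | ⟨ρ, h1, _⟩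
  · exact absurd h1 hv
  · exact absurd h1.symm hv
  · rw [rsub_eq hri h2] at h1; simpa using h1
  · exact absurd h1.symm (by simp)

lemma cmb_root_pred (hri : T.ri = ∅) {v : List (DLRole ℕ)} {P : ℕ}
    (hv : v ≠ []) (h : CMb T τ P v []) : v = [(P, false)] := by
  rcases h with ⟨h1, _⟩ | ⟨h1, _⟩ | ⟨ρ, h1, _⟩ | ⟨ρ, h1, h2⟩
  · exact absurd h1 hv
  · exact absurd h1 hv
  · exact absurd h1.symm (by simp)
  · rw [rsub_eq hri h2] at h1; simpa using h1

end Aux2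
section Aux3

variable {T : DLOnt ℕ ℕ}

lemma mem_qtw {q : Finset (QAtom ℕ ℕ ℕ)} {tr ti : Finset ℕ} {a : QAtom ℕ ℕ ℕ} :
    a ∈ qtw q tr ti ↔ a ∈ q ∧ a.vars ⊆ tr ∪ ti ∧ ¬ a.vars ⊆ tr := by
  simp [qtw, Finset.mem_filter, and_assoc]

lemma mem_qvars {S : Finset (QAtom ℕ ℕ ℕ)} {v : ℕ} :
    v ∈ qvars S ↔ ∃ a ∈ S, v ∈ a.vars := Finset.mem_biUnion

lemma qvars_mono {S S' : Finset (QAtom ℕ ℕ ℕ)} (h : S ⊆ S') : qvars S ⊆ qvars S' := by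
  intro v hv
  obtain ⟨a, ha, hva⟩ := mem_qvars.1 hv
  exact mem_qvars.2 ⟨a, h ha, hva⟩

lemma vars_nonempty (a : QAtom ℕ ℕ ℕ) : a.vars.Nonempty := by
  cases a <;> simp [QAtom.vars]

/-- The root part of a candidate tree witness is determined by the internal part. -/
lemma tr_char {q : Finset (QAtom ℕ ℕ ℕ)} {ans tr ti : Finset ℕ}
    (pre : IsPreTW T q ans tr ti) (v : ℕ) :
    v ∈ tr ↔ (v ∉ ti ∧ ∃ a ∈ q, v ∈ a.vars ∧ ¬ Disjoint a.vars ti) := by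
  obtain ⟨hdj, hne, hans, hsub, hclo, τ, h, hh, htr, hrt⟩ := pre
  constructor
  · intro hv
    refine ⟨Finset.disjoint_left.1 hdj hv, ?_⟩
    obtain ⟨a, ha, hva⟩ := mem_qvars.1 (htr hv)
    obtain ⟨haq, hs, hns⟩ := mem_qtw.1 ha
    obtain ⟨w, hw, hwn⟩ := Finset.not_subset.1 hns
    have hwti : w ∈ ti := by
      rcases Finset.mem_union.1 (hs hw) with h' | h'
      · exact absurd h' hwn
      · exact h'
    exact ⟨a, haq, hva, Finset.not_disjoint_iff.2 ⟨w, hw, hwti⟩⟩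
  · rintro ⟨hvti, a, ha, hva, hnd⟩
    obtain ⟨haq, hs, _⟩ := mem_qtw.1 (hclo a ha hnd)
    rcases Finset.mem_union.1 (hs hva) with h' | h'
    · exact h'
    · exact absurd h' hvti

/-- Internal variables are mapped to non-root elements, and their atoms are in `q_t`. -/
lemma inti_aux {q : Finset (QAtom ℕ ℕ ℕ)} {ans tr ti : Finset ℕ}
    (pre : IsPreTW T q ans tr ti) {h : ℕ → List (DLRole ℕ)}
    (hrt : ∀ v ∈ qvars (qtw q tr ti), (h v = [] ↔ v ∈ tr))
    {v : ℕ} (hv : v ∈ ti) : v ∈ qvars (qtw q tr ti) ∧ h v ≠ [] := by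
  obtain ⟨hdj, hne, hans, hsub, hclo, _⟩ := pre
  obtain ⟨a, ha, hva⟩ := mem_qvars.1 (hsub (Finset.mem_union_right _ hv))
  have haq : a ∈ qtw q tr ti := hclo a ha (Finset.not_disjoint_iff.2 ⟨v, hva, hv⟩)
  have hq : v ∈ qvars (qtw q tr ti) := mem_qvars.2 ⟨a, haq, hva⟩
  refine ⟨hq, fun hnil => ?_⟩
  exact Finset.disjoint_left.1 hdj ((hrt v hq).1 hnil) hv

end Aux3
section Aux4

variable {T : DLOnt ℕ ℕ}

/-- Core rigidity: two tree witnesses whose homomorphisms agree on some common internal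
variable coincide. -/
lemma tw_eq_of_seed (hri : T.ri = ∅) {q : Finset (QAtom ℕ ℕ ℕ)} {ans : Finset ℕ}
    {tr ti tr' ti' : Finset ℕ}
    (ht : IsTW T q ans tr ti) (ht' : IsTW T q ans tr' ti')
    {τ τ' : DLConcept ℕ ℕ} {h h' : ℕ → List (DLRole ℕ)}
    (hh : HomOn T τ (qtw q tr ti) h)
    (hrt : ∀ v ∈ qvars (qtw q tr ti), (h v = [] ↔ v ∈ tr))
    (hh' : HomOn T τ' (qtw q tr' ti') h')
    (hrt' : ∀ v ∈ qvars (qtw q tr' ti'), (h' v = [] ↔ v ∈ tr'))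
    {y : ℕ} (hy : y ∈ ti) (hy' : y ∈ ti') (hseed : h y = h' y) :
    ti = ti' ∧ tr = tr' := by
  classical
  obtain ⟨hdj, hne, hans, hsub, hclo, _⟩ := ht.1
  obtain ⟨hdj', hne', hans', hsub', hclo', _⟩ := ht'.1
  set ti2 : Finset ℕ := (ti ∩ ti').filter (fun v => h v = h' v) with hti2
  have mem_ti2 : ∀ v, v ∈ ti2 ↔ v ∈ ti ∧ v ∈ ti' ∧ h v = h' v := by
    intro v; simp [hti2, Finset.mem_filter, Finset.mem_inter, and_assoc]
  set N : Finset ℕ := (q.filter (fun a => ¬ Disjoint a.vars ti2)).biUnion QAtom.vars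
    with hN
  set tr2 : Finset ℕ := N \ ti2 with htr2
  have f0 : y ∈ ti2 := (mem_ti2 y).2 ⟨hy, hy', hseed⟩
  have f1 : ti2 ⊆ ti := fun v hv => ((mem_ti2 v).1 hv).1
  have f1' : ti2 ⊆ ti' := fun v hv => ((mem_ti2 v).1 hv).2.1
  -- the key propagation claim
  have star : ∀ a ∈ q, ¬ Disjoint a.vars ti2 → ∀ v ∈ a.vars,
      h v = h' v ∧ (v ∈ ti2 ∨ (v ∈ tr ∧ v ∈ tr')) := by
    intro a ha hnd v hv
    obtain ⟨u, hu, hu2⟩ := Finset.not_disjoint_iff.1 hnd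
    obtain ⟨huti, huti', hueq⟩ := (mem_ti2 u).1 hu2
    have haq : a ∈ qtw q tr ti := hclo a ha (Finset.not_disjoint_iff.2 ⟨u, hu, huti⟩)
    have haq' : a ∈ qtw q tr' ti' := hclo' a ha (Finset.not_disjoint_iff.2 ⟨u, hu, huti'⟩)
    have hunil : h u ≠ [] := (inti_aux ht.1 hrt huti).2
    have hunil' : h' u ≠ [] := by rw [← hueq]; exact hunil
    have hvq : v ∈ qvars (qtw q tr ti) := mem_qvars.2 ⟨a, haq, hv⟩
    have hvq' : v ∈ qvars (qtw q tr' ti') := mem_qvars.2 ⟨a, haq', hv⟩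
    have key : h v = h' v := by
      by_cases hvu : v = u
      · rw [hvu]; exact hueq
      cases a with
      | ua A w =>
        simp only [QAtom.vars, Finset.mem_singleton] at hv hu
        exact absurd (hv.trans hu.symm) hvu
      | ba R w z =>
        have hcm : CMb T τ R (h w) (h z) := ((hh.2 _ haq).2 R w z rfl)
        have hcm' : CMb T τ' R (h' w) (h' z) := ((hh'.2 _ haq').2 R w z rfl)
        have hwq : w ∈ qvars (qtw q tr ti) :=
          mem_qvars.2 ⟨_, haq, by simp [QAtom.vars]⟩
        have hzq : z ∈ qvars (qtw q tr ti) :=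
          mem_qvars.2 ⟨_, haq, by simp [QAtom.vars]⟩
        have hwq' : w ∈ qvars (qtw q tr' ti') :=
          mem_qvars.2 ⟨_, haq', by simp [QAtom.vars]⟩
        have hzq' : z ∈ qvars (qtw q tr' ti') :=
          mem_qvars.2 ⟨_, haq', by simp [QAtom.vars]⟩
        simp only [QAtom.vars, Finset.mem_insert, Finset.mem_singleton] at hv hu
        rcases hu with hu | hu <;> rcases hv with hv | hv
        · exact absurd (hv.trans hu.symm) hvu
        · -- u = w, v = z : successor direction
          rw [hv]
          have hweq : h w = h' w := by rw [← hu]; exact hueq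
          rw [← hweq] at hcm'
          exact succ_unique hri (by rw [← hu]; exact hunil) (hh.1 w hwq)
            (hh.1 z hzq) (hh'.1 z hzq') hcm hcm'
        · -- u = z, v = w : predecessor direction
          rw [hv]
          have hzeq : h z = h' z := by rw [← hu]; exact hueq
          rw [← hzeq] at hcm'
          exact pred_unique hri (by rw [← hu]; exact hunil) (hh.1 z hzq)
            (hh.1 w hwq) (hh'.1 w hwq') hcm hcm'
        · exact absurd (hv.trans hu.symm) hvu
    refine ⟨key, ?_⟩
    by_cases hnil : h v = []
    · exact Or.inr ⟨(hrt v hvq).1 hnil, (hrt' v hvq').1 (by rw [← key]; exact hnil)⟩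
    · left
      have hvti : v ∈ ti := by
        obtain ⟨_, hs, _⟩ := mem_qtw.1 haq
        rcases Finset.mem_union.1 (hs hv) with h1 | h1
        · exact absurd ((hrt v hvq).2 h1) hnil
        · exact h1
      have hvti' : v ∈ ti' := by
        obtain ⟨_, hs, _⟩ := mem_qtw.1 haq'
        rcases Finset.mem_union.1 (hs hv) with h1 | h1
        · exact absurd ((hrt' v hvq').2 h1) (by rw [← key]; exact hnil)
        · exact h1
      exact (mem_ti2 v).2 ⟨hvti, hvti', key⟩
  -- closure of the intersection witness
  have clo2 : ∀ a ∈ q, ¬ Disjoint a.vars ti2 → a ∈ qtw q tr2 ti2 := by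
    intro a ha hnd
    refine mem_qtw.2 ⟨ha, ?_, ?_⟩
    · intro v hv
      rcases (star a ha hnd v hv).2 with h1 | h1
      · exact Finset.mem_union_right _ h1
      · refine Finset.mem_union_left _ (Finset.mem_sdiff.2 ⟨?_, ?_⟩)
        · exact Finset.mem_biUnion.2 ⟨a, Finset.mem_filter.2 ⟨ha, hnd⟩, hv⟩
        · intro h2
          exact Finset.disjoint_left.1 hdj h1.1 (f1 h2)
    · obtain ⟨u, hu, hu2⟩ := Finset.not_disjoint_iff.1 hnd
      exact Finset.not_subset.2 ⟨u, hu, fun h2 => (Finset.mem_sdiff.1 h2).2 hu2⟩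
  have sub2 : qtw q tr2 ti2 ⊆ qtw q tr ti := by
    intro a ha2
    obtain ⟨haq, hs2, hns2⟩ := mem_qtw.1 ha2
    obtain ⟨u, hu, hun⟩ := Finset.not_subset.1 hns2
    have hu2 : u ∈ ti2 := by
      rcases Finset.mem_union.1 (hs2 hu) with h1 | h1
      · exact absurd h1 hun
      · exact h1
    exact hclo a haq (Finset.not_disjoint_iff.2 ⟨u, hu, f1 hu2⟩)
  have meets2 : ∀ a ∈ qtw q tr2 ti2, ¬ Disjoint a.vars ti2 := by
    intro a ha2
    obtain ⟨haq, hs2, hns2⟩ := mem_qtw.1 ha2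
    obtain ⟨u, hu, hun⟩ := Finset.not_subset.1 hns2
    have hu2 : u ∈ ti2 := by
      rcases Finset.mem_union.1 (hs2 hu) with h1 | h1
      · exact absurd h1 hun
      · exact h1
    exact Finset.not_disjoint_iff.2 ⟨u, hu, hu2⟩
  -- (tr2, ti2) is a candidate tree witness
  have pre2 : IsPreTW T q ans tr2 ti2 := by
    refine ⟨Finset.sdiff_disjoint, ⟨y, f0⟩,
      Finset.disjoint_of_subset_left f1 hans, ?_, clo2, τ, h, ?_, ?_, ?_⟩
    · apply Finset.union_subset
      · intro v hv
        obtain ⟨hvN, _⟩ := Finset.mem_sdiff.1 hv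
        obtain ⟨a, haf, hva⟩ := Finset.mem_biUnion.1 hvN
        exact mem_qvars.2 ⟨a, (Finset.mem_filter.1 haf).1, hva⟩
      · exact subset_trans f1 (subset_trans Finset.subset_union_right hsub)
    · exact ⟨fun v hv => hh.1 v (qvars_mono sub2 hv),
        fun a ha => hh.2 a (sub2 ha)⟩
    · intro v hv
      obtain ⟨hvN, hvn2⟩ := Finset.mem_sdiff.1 hv
      obtain ⟨a, haf, hva⟩ := Finset.mem_biUnion.1 hvN
      obtain ⟨ha, hnd⟩ := Finset.mem_filter.1 haf
      exact mem_qvars.2 ⟨a, clo2 a ha hnd, hva⟩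
    · intro v hv
      obtain ⟨a, ha2, hva⟩ := mem_qvars.1 hv
      have hnd := meets2 a ha2
      have ha : a ∈ q := (mem_qtw.1 ha2).1
      rcases (star a ha hnd v hva).2 with h1 | h1
      · constructor
        · intro hnil
          exact absurd hnil (inti_aux ht.1 hrt (f1 h1)).2
        · intro h2
          exact absurd h1 (Finset.mem_sdiff.1 h2).2
      · have hvq : v ∈ qvars (qtw q tr ti) :=
          mem_qvars.2 ⟨a, sub2 ha2, hva⟩
        constructor
        · intro _
          refine Finset.mem_sdiff.2 ⟨?_, ?_⟩
          · exact Finset.mem_biUnion.2 ⟨a, Finset.mem_filter.2 ⟨ha, hnd⟩, hva⟩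
          · intro h2
            exact Finset.disjoint_left.1 hdj h1.1 (f1 h2)
        · intro _
          exact (hrt v hvq).2 h1.1
  have e1 : ti2 = ti := ht.2 tr2 ti2 pre2 f1
  have e2 : ti2 = ti' := ht'.2 tr2 ti2 pre2 f1'
  have eti : ti = ti' := e1.symm.trans e2
  refine ⟨eti, ?_⟩
  ext v
  rw [tr_char ht.1 v, tr_char ht'.1 v, eti]

end Aux4
section Aux5

variable {T : DLOnt ℕ ℕ} {q : Finset (QAtom ℕ ℕ ℕ)} {ans : Finset ℕ}

/-- At most one tree witness has `x` root and `y` internal for a given atom `P(x,y)`. -/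
lemma tw_unique_succ (hri : T.ri = ∅) {tr ti tr' ti' : Finset ℕ}
    (ht : IsTW T q ans tr ti) (ht' : IsTW T q ans tr' ti') {P x y : ℕ}
    (ha : QAtom.ba P x y ∈ q) (hx : x ∈ tr) (hy : y ∈ ti)
    (hx' : x ∈ tr') (hy' : y ∈ ti') : tr = tr' ∧ ti = ti' := by
  obtain ⟨hdj, hne, hans, hsub, hclo, τ, h, hh, htr, hrt⟩ := ht.1
  obtain ⟨hdj', hne', hans', hsub', hclo', τ', h', hh', htr', hrt'⟩ := ht'.1
  have hyv : y ∈ (QAtom.ba P x y : QAtom ℕ ℕ ℕ).vars := by simp [QAtom.vars]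
  have hxv : x ∈ (QAtom.ba P x y : QAtom ℕ ℕ ℕ).vars := by simp [QAtom.vars]
  have haq : QAtom.ba P x y ∈ qtw q tr ti :=
    hclo _ ha (Finset.not_disjoint_iff.2 ⟨y, hyv, hy⟩)
  have haq' : QAtom.ba P x y ∈ qtw q tr' ti' :=
    hclo' _ ha (Finset.not_disjoint_iff.2 ⟨y, hyv, hy'⟩)
  have hcm : CMb T τ P (h x) (h y) := (hh.2 _ haq).2 P x y rfl
  have hcm' : CMb T τ' P (h' x) (h' y) := (hh'.2 _ haq').2 P x y rfl
  have hx0 : h x = [] := (hrt x (mem_qvars.2 ⟨_, haq, hxv⟩)).2 hx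
  have hx0' : h' x = [] := (hrt' x (mem_qvars.2 ⟨_, haq', hxv⟩)).2 hx'
  have hynil : h y ≠ [] := (inti_aux ht.1 hrt hy).2
  have hynil' : h' y ≠ [] := (inti_aux ht'.1 hrt' hy').2
  rw [hx0] at hcm; rw [hx0'] at hcm'
  have hseed : h y = h' y := by
    rw [cmb_root_succ hri hynil hcm, cmb_root_succ hri hynil' hcm']
  have := tw_eq_of_seed hri ht ht' hh hrt hh' hrt' hy hy' hseed
  exact ⟨this.2, this.1⟩

/-- At most one tree witness has `y` root and `x` internal for a given atom `P(x,y)`. -/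
lemma tw_unique_pred (hri : T.ri = ∅) {tr ti tr' ti' : Finset ℕ}
    (ht : IsTW T q ans tr ti) (ht' : IsTW T q ans tr' ti') {P x y : ℕ}
    (ha : QAtom.ba P x y ∈ q) (hy : y ∈ tr) (hx : x ∈ ti)
    (hy' : y ∈ tr') (hx' : x ∈ ti') : tr = tr' ∧ ti = ti' := by
  obtain ⟨hdj, hne, hans, hsub, hclo, τ, h, hh, htr, hrt⟩ := ht.1
  obtain ⟨hdj', hne', hans', hsub', hclo', τ', h', hh', htr', hrt'⟩ := ht'.1
  have hyv : y ∈ (QAtom.ba P x y : QAtom ℕ ℕ ℕ).vars := by simp [QAtom.vars]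
  have hxv : x ∈ (QAtom.ba P x y : QAtom ℕ ℕ ℕ).vars := by simp [QAtom.vars]
  have haq : QAtom.ba P x y ∈ qtw q tr ti :=
    hclo _ ha (Finset.not_disjoint_iff.2 ⟨x, hxv, hx⟩)
  have haq' : QAtom.ba P x y ∈ qtw q tr' ti' :=
    hclo' _ ha (Finset.not_disjoint_iff.2 ⟨x, hxv, hx'⟩)
  have hcm : CMb T τ P (h x) (h y) := (hh.2 _ haq).2 P x y rfl
  have hcm' : CMb T τ' P (h' x) (h' y) := (hh'.2 _ haq').2 P x y rfl
  have hy0 : h y = [] := (hrt y (mem_qvars.2 ⟨_, haq, hyv⟩)).2 hy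
  have hy0' : h' y = [] := (hrt' y (mem_qvars.2 ⟨_, haq', hyv⟩)).2 hy'
  have hxnil : h x ≠ [] := (inti_aux ht.1 hrt hx).2
  have hxnil' : h' x ≠ [] := (inti_aux ht'.1 hrt' hx').2
  rw [hy0] at hcm; rw [hy0'] at hcm'
  have hseed : h x = h' x := by
    rw [cmb_root_pred hri hxnil hcm, cmb_root_pred hri hxnil' hcm']
  have := tw_eq_of_seed hri ht ht' hh hrt hh' hrt' hx hx' hseed
  exact ⟨this.2, this.1⟩

/-- At most one detached tree witness meets any given variable. -/
lemma tw_unique_det {ti ti' : Finset ℕ}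
    (ht : IsTW T q ans ∅ ti) (ht' : IsTW T q ans ∅ ti') {u : ℕ}
    (hu : u ∈ ti) (hu' : u ∈ ti') : ti = ti' := by
  classical
  obtain ⟨hdj, hne, hans, hsub, hclo, τ, h, hh, htr, hrt⟩ := ht.1
  obtain ⟨hdj', hne', hans', hsub', hclo', τ', h', hh', htr', hrt'⟩ := ht'.1
  set ti2 : Finset ℕ := ti ∩ ti' with hti2
  have f1 : ti2 ⊆ ti := Finset.inter_subset_left
  have f1' : ti2 ⊆ ti' := Finset.inter_subset_right
  have clo2 : ∀ a ∈ q, ¬ Disjoint a.vars ti2 → a ∈ qtw q ∅ ti2 := by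
    intro a ha hnd
    obtain ⟨w, hw, hw2⟩ := Finset.not_disjoint_iff.1 hnd
    have haq : a ∈ qtw q ∅ ti :=
      hclo a ha (Finset.not_disjoint_iff.2 ⟨w, hw, f1 hw2⟩)
    have haq' : a ∈ qtw q ∅ ti' :=
      hclo' a ha (Finset.not_disjoint_iff.2 ⟨w, hw, f1' hw2⟩)
    refine mem_qtw.2 ⟨ha, ?_, ?_⟩
    · intro v hv
      have h1 : v ∈ ti := by
        have := (mem_qtw.1 haq).2.1 hv
        simpa using this
      have h2 : v ∈ ti' := by
        have := (mem_qtw.1 haq').2.1 hv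
        simpa using this
      exact Finset.mem_union_right _ (Finset.mem_inter.2 ⟨h1, h2⟩)
    · obtain ⟨v, hv⟩ := vars_nonempty a
      exact Finset.not_subset.2 ⟨v, hv, Finset.notMem_empty v⟩
  have sub2 : qtw q ∅ ti2 ⊆ qtw q ∅ ti := by
    intro a ha2
    obtain ⟨haq, hs2, hns2⟩ := mem_qtw.1 ha2
    obtain ⟨w, hw, hwn⟩ := Finset.not_subset.1 hns2
    have hw2 : w ∈ ti2 := by
      have := hs2 hw; simpa using this
    exact hclo a haq (Finset.not_disjoint_iff.2 ⟨w, hw, f1 hw2⟩)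
  have pre2 : IsPreTW T q ans ∅ ti2 := by
    refine ⟨Finset.disjoint_empty_left _,
      ⟨u, Finset.mem_inter.2 ⟨hu, hu'⟩⟩,
      Finset.disjoint_of_subset_left f1 hans, ?_, clo2, τ, h, ?_, ?_, ?_⟩
    · refine Finset.union_subset (Finset.empty_subset _) ?_
      exact subset_trans f1 (subset_trans Finset.subset_union_right hsub)
    · exact ⟨fun v hv => hh.1 v (qvars_mono sub2 hv),
        fun a ha => hh.2 a (sub2 ha)⟩
    · exact Finset.empty_subset _
    · intro v hv
      obtain ⟨a, ha2, hva⟩ := mem_qvars.1 hv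
      have hvti2 : v ∈ ti2 := by
        have := (mem_qtw.1 ha2).2.1 hva
        simpa using this
      have hvnil : h v ≠ [] := (inti_aux ht.1 hrt (f1 hvti2)).2
      exact iff_of_false hvnil (Finset.notMem_empty v)
  have e1 : ti2 = ti := ht.2 ∅ ti2 pre2 f1
  have e2 : ti2 = ti' := ht'.2 ∅ ti2 pre2 f1'
  exact e1.symm.trans e2

/-- Every tree witness is anchored in a binary atom, or is detached. -/
lemma tw_trichotomy {tr ti : Finset ℕ} (ht : IsTW T q ans tr ti) :
    (∃ P x y, QAtom.ba P x y ∈ q ∧ x ∈ tr ∧ y ∈ ti) ∨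
    (∃ P x y, QAtom.ba P x y ∈ q ∧ y ∈ tr ∧ x ∈ ti) ∨ tr = ∅ := by
  obtain ⟨hdj, hne, hans, hsub, hclo, τ, h, hh, htr, hrt⟩ := ht.1
  by_cases htre : tr = ∅
  · exact Or.inr (Or.inr htre)
  obtain ⟨v, hv⟩ := Finset.nonempty_iff_ne_empty.2 htre
  obtain ⟨a, ha2, hva⟩ := mem_qvars.1 (htr hv)
  obtain ⟨haq, hs, hns⟩ := mem_qtw.1 ha2
  cases a with
  | ua A w =>
    simp only [QAtom.vars, Finset.mem_singleton] at hva
    exact absurd (fun z hz => by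
      simp only [QAtom.vars, Finset.mem_singleton] at hz
      rw [hz, ← hva]; exact hv) hns
  | ba P w z =>
    simp only [QAtom.vars, Finset.mem_insert, Finset.mem_singleton] at hva
    by_cases hwtr : w ∈ tr
    · have hz : z ∉ tr := by
        intro hztr
        exact hns (fun c hc => by
          simp only [QAtom.vars, Finset.mem_insert, Finset.mem_singleton] at hc
          rcases hc with hc | hc
          · rw [hc]; exact hwtr
          · rw [hc]; exact hztr)
      have hzti : z ∈ ti := by
        have : z ∈ tr ∪ ti := hs (by simp [QAtom.vars])
        rcases Finset.mem_union.1 this with h1 | h1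
        · exact absurd h1 hz
        · exact h1
      exact Or.inl ⟨P, w, z, haq, hwtr, hzti⟩
    · have hwti : w ∈ ti := by
        have : w ∈ tr ∪ ti := hs (by simp [QAtom.vars])
        rcases Finset.mem_union.1 this with h1 | h1
        · exact absurd h1 hwtr
        · exact h1
      have hztr : z ∈ tr := by
        rcases hva with hva | hva
        · rw [← hva] at hwtr; exact absurd hv hwtr
        · rw [← hva]; exact hv
      exact Or.inr (Or.inl ⟨P, w, z, haq, hztr, hwti⟩)

end Aux5
open Classical in
/-- A tag attached to each tree witness: an anchoring atom together with its kind. -/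
noncomputable def twTag (q : Finset (QAtom ℕ ℕ ℕ)) (p : Finset ℕ × Finset ℕ) :
    QAtom ℕ ℕ ℕ × Fin 3 :=
  if h1 : ∃ P x y, QAtom.ba P x y ∈ q ∧ x ∈ p.1 ∧ y ∈ p.2 then
    (QAtom.ba h1.choose h1.choose_spec.choose h1.choose_spec.choose_spec.choose, 0)
  else if h2 : ∃ P x y, QAtom.ba P x y ∈ q ∧ y ∈ p.1 ∧ x ∈ p.2 then
    (QAtom.ba h2.choose h2.choose_spec.choose h2.choose_spec.choose_spec.choose, 1)
  else if h3 : ∃ a, a ∈ q ∧ ¬ Disjoint a.vars p.2 then (h3.choose, 2)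
  else (QAtom.ua 0 0, 2)

lemma twTag_cases (q : Finset (QAtom ℕ ℕ ℕ)) (p : Finset ℕ × Finset ℕ)
    (hex : ∃ a, a ∈ q ∧ ¬ Disjoint a.vars p.2) :
    ((twTag q p).2 = 0 ∧ ∃ P x y, (twTag q p).1 = QAtom.ba P x y ∧
        QAtom.ba P x y ∈ q ∧ x ∈ p.1 ∧ y ∈ p.2) ∨
    ((twTag q p).2 = 1 ∧ ¬ (∃ P x y, QAtom.ba P x y ∈ q ∧ x ∈ p.1 ∧ y ∈ p.2) ∧
      ∃ P x y, (twTag q p).1 = QAtom.ba P x y ∧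
        QAtom.ba P x y ∈ q ∧ y ∈ p.1 ∧ x ∈ p.2) ∨
    ((twTag q p).2 = 2 ∧ ¬ (∃ P x y, QAtom.ba P x y ∈ q ∧ x ∈ p.1 ∧ y ∈ p.2) ∧
      ¬ (∃ P x y, QAtom.ba P x y ∈ q ∧ y ∈ p.1 ∧ x ∈ p.2) ∧
      (twTag q p).1 ∈ q ∧ ¬ Disjoint (twTag q p).1.vars p.2) := by
  unfold twTag
  split_ifs with h1 h2
  · exact Or.inl ⟨rfl, _, _, _, rfl, h1.choose_spec.choose_spec.choose_spec⟩
  · exact Or.inr (Or.inl ⟨rfl, h1, _, _, _, rfl,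
      h2.choose_spec.choose_spec.choose_spec⟩)
  · exact Or.inr (Or.inr ⟨rfl, h1, h2, hex.choose_spec.1, hex.choose_spec.2⟩)

lemma twTag_fst_mem (q : Finset (QAtom ℕ ℕ ℕ)) (p : Finset ℕ × Finset ℕ)
    (hex : ∃ a, a ∈ q ∧ ¬ Disjoint a.vars p.2) : (twTag q p).1 ∈ q := by
  rcases twTag_cases q p hex with ⟨_, P, x, y, he, hm, _⟩ | ⟨_, _, P, x, y, he, hm, _⟩ |
    ⟨_, _, _, hm, _⟩
  · rw [he]; exact hm
  · rw [he]; exact hm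
  · exact hm
/-- For OMQs `Q = (T, q)` in which `T` contains no role-inclusion axioms,
the number of tree witnesses for `Q` is at most `3|q|`. -/
theorem stmt_12 (T : DLOnt ℕ ℕ) (q : Finset (QAtom ℕ ℕ ℕ)) (ans : Finset ℕ)
    (hri : T.ri = ∅) :
    {p : Finset ℕ × Finset ℕ | IsTW T q ans p.1 p.2}.ncard ≤ 3 * q.card := by
  classical
  set S : Set (Finset ℕ × Finset ℕ) := {p | IsTW T q ans p.1 p.2} with hS
  have hex : ∀ p ∈ S, ∃ a, a ∈ q ∧ ¬ Disjoint a.vars p.2 := by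
    intro p hp
    have htw : IsTW T q ans p.1 p.2 := hp
    obtain ⟨hdj, hne, hans, hsub, hclo, _⟩ := htw.1
    obtain ⟨v, hv⟩ := hne
    obtain ⟨a, ha, hva⟩ := mem_qvars.1 (hsub (Finset.mem_union_right _ hv))
    exact ⟨a, ha, Finset.not_disjoint_iff.2 ⟨v, hva, hv⟩⟩
  have hinj : Set.InjOn (twTag q) S := by
    intro p hp p' hp' heq
    have hexp := hex p hp
    have hexp' := hex p' hp'
    have htw : IsTW T q ans p.1 p.2 := hp
    have htw' : IsTW T q ans p'.1 p'.2 := hp'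
    have hsnd := congrArg Prod.snd heq
    have hfst := congrArg Prod.fst heq
    rcases twTag_cases q p hexp with ⟨e2, P, x, y, he, hm, hx, hy⟩ |
      ⟨e2, hn1, P, x, y, he, hm, hy, hx⟩ | ⟨e2, hn1, hn2, hm, hnd⟩ <;>
      rcases twTag_cases q p' hexp' with ⟨e2', P', x', y', he', hm', hx', hy'⟩ |
        ⟨e2', hn1', P', x', y', he', hm', hy', hx'⟩ | ⟨e2', hn1', hn2', hm', hnd'⟩
    · -- both anchored forward
      rw [he, he'] at hfst
      injection hfst with hP hxe hye
      subst hP; subst hxe; subst hye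
      have := tw_unique_succ hri htw htw' hm hx hy hx' hy'
      exact Prod.ext this.1 this.2
    · rw [e2, e2'] at hsnd; exact absurd hsnd (by decide)
    · rw [e2, e2'] at hsnd; exact absurd hsnd (by decide)
    · rw [e2, e2'] at hsnd; exact absurd hsnd (by decide)
    · -- both anchored backward
      rw [he, he'] at hfst
      injection hfst with hP hxe hye
      subst hP; subst hxe; subst hye
      have := tw_unique_pred hri htw htw' hm hy hx hy' hx'
      exact Prod.ext this.1 this.2
    · rw [e2, e2'] at hsnd; exact absurd hsnd (by decide)
    · rw [e2, e2'] at hsnd; exact absurd hsnd (by decide)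
    · rw [e2, e2'] at hsnd; exact absurd hsnd (by decide)
    · -- both detached
      have h0 : p.1 = ∅ := by
        rcases tw_trichotomy htw with h1 | h1 | h1
        · exact absurd h1 hn1
        · exact absurd h1 hn2
        · exact h1
      have h0' : p'.1 = ∅ := by
        rcases tw_trichotomy htw' with h1 | h1 | h1
        · exact absurd h1 hn1'
        · exact absurd h1 hn2'
        · exact h1
      have htw0 : IsTW T q ans ∅ p.2 := h0 ▸ htw
      have htw0' : IsTW T q ans ∅ p'.2 := h0' ▸ htw'
      obtain ⟨u, hu, hu'⟩ := Finset.not_disjoint_iff.1 hnd'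
      rw [← hfst] at hu
      have hup : u ∈ p.2 := by
        obtain ⟨hdj, hne, hans, hsub, hclo, _⟩ := htw.1
        have haq := hclo _ hm hnd
        have := (mem_qtw.1 haq).2.1 hu
        rcases Finset.mem_union.1 this with h1 | h1
        · rw [h0] at h1; exact absurd h1 (Finset.notMem_empty u)
        · exact h1
      have := tw_unique_det htw0 htw0' hup hu'
      exact Prod.ext (h0.trans h0'.symm) this
  have h1 : S.ncard = (twTag q '' S).ncard := (Set.ncard_image_of_injOn hinj).symm
  have h2 : twTag q '' S ⊆ ↑(q ×ˢ (Finset.univ : Finset (Fin 3))) := by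
    rintro _ ⟨p, hp, rfl⟩
    simp only [Finset.coe_product, Set.mem_prod, Finset.mem_coe]
    exact ⟨twTag_fst_mem q p (hex p hp), by simp⟩
  calc S.ncard = (twTag q '' S).ncard := h1
    _ ≤ (↑(q ×ˢ (Finset.univ : Finset (Fin 3))) : Set (QAtom ℕ ℕ ℕ × Fin 3)).ncard :=
        Set.ncard_le_ncard h2 (Finset.finite_toSet _)
    _ = (q ×ˢ (Finset.univ : Finset (Fin 3))).card := Set.ncard_coe_finset _
    _ = q.card * 3 := by rw [Finset.card_product, Finset.card_univ, Fintype.card_fin]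
    _ = 3 * q.card := Nat.mul_comm _ _
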